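/- Monotonicity of softmax-weighted averages in temperature: let M be a nonempty finite index set, let ℓ^i ∈ ℝ for i ∈ M, and for τ > 0 define weights w^i_τ = exp(ℓ^i / τ) / Σ_{j ∈ M} exp(ℓ^j / τ) and F(τ) = Σ_{i ∈ M} w^i_τ ℓ^i. Then F is nonincreasing in τ (indeed F'(τ) = (F(τ)² − Σ_{i ∈ M} w^i_τ (ℓ^i)²)/τ² ≤ 0), lim_{τ → ∞} w^i_τ = 1/|M| for every i, and consequently for all τ_1 > τ_2 > 0: (1/|M|) Σ_{i ∈ M} ℓ^i ≤ F(τ_1) ≤ F(τ_2). -/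

import Mathlib

open Finset Filter

/-- **Monotonicity of softmax-weighted averages in temperature.**  For a nonempty
finite index set `M`, scores `ℓ : M → ℝ`, softmax weights
`w τ i = exp(ℓ i / τ) / Σ_j exp(ℓ j / τ)` and `F τ = Σ_i w τ i * ℓ i`:
(1) `F` has derivative `(F τ² − Σ_i w τ i (ℓ i)²)/τ²` at every `τ > 0`, and this
derivative is `≤ 0` (so `F` is nonincreasing on `(0, ∞)`);
(2) `w τ i → 1/|M|` as `τ → ∞`, for every `i`;
(3) for all `τ₁ > τ₂ > 0`, `(1/|M|) Σ_i ℓ i ≤ F τ₁ ≤ F τ₂`. -/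
theorem softmax_weighted_average_monotone
    (M : Type*) [Fintype M] [Nonempty M] (ℓ : M → ℝ)
    (w : ℝ → M → ℝ) (F : ℝ → ℝ)
    (hw : ∀ τ i, w τ i = Real.exp (ℓ i / τ) / ∑ j, Real.exp (ℓ j / τ))
    (hF : ∀ τ, F τ = ∑ i, w τ i * ℓ i) :
    (∀ τ : ℝ, 0 < τ →
      HasDerivAt F ((F τ ^ 2 - ∑ i, w τ i * ℓ i ^ 2) / τ ^ 2) τ ∧
      (F τ ^ 2 - ∑ i, w τ i * ℓ i ^ 2) / τ ^ 2 ≤ 0) ∧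
    (∀ i, Tendsto (fun τ => w τ i) atTop (nhds ((Fintype.card M : ℝ)⁻¹))) ∧
    (∀ τ₁ τ₂ : ℝ, 0 < τ₂ → τ₂ < τ₁ →
      (Fintype.card M : ℝ)⁻¹ * ∑ i, ℓ i ≤ F τ₁ ∧ F τ₁ ≤ F τ₂) := by
  classical
  set S : ℝ → ℝ := fun τ => ∑ j, Real.exp (ℓ j / τ) with hS
  set N : ℝ → ℝ := fun τ => ∑ j, Real.exp (ℓ j / τ) * ℓ j with hN
  set Q : ℝ → ℝ := fun τ => ∑ j, Real.exp (ℓ j / τ) * ℓ j ^ 2 with hQ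
  have hSpos : ∀ τ, 0 < S τ := fun τ =>
    Finset.sum_pos (fun j _ => Real.exp_pos _) Finset.univ_nonempty
  have hwpos : ∀ τ i, 0 < w τ i := fun τ i => by
    rw [hw]; exact div_pos (Real.exp_pos _) (hSpos τ)
  have hwsum : ∀ τ, ∑ i, w τ i = 1 := by
    intro τ
    simp only [hw]
    rw [← Finset.sum_div, div_self (hSpos τ).ne']
  have hFN : ∀ τ, F τ = N τ / S τ := by
    intro τ
    rw [hF]
    simp only [hw, hN]
    rw [Finset.sum_div]
    exact Finset.sum_congr rfl fun i _ => by ring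
  have hQw : ∀ τ, (∑ i, w τ i * ℓ i ^ 2) = Q τ / S τ := by
    intro τ
    simp only [hw, hQ]
    rw [Finset.sum_div]
    exact Finset.sum_congr rfl fun i _ => by ring
  -- derivatives of S and N at τ > 0
  have hderiv : ∀ τ : ℝ, 0 < τ →
      HasDerivAt S (-(N τ) / τ ^ 2) τ ∧ HasDerivAt N (-(Q τ) / τ ^ 2) τ := by
    intro τ hτ
    have hterm : ∀ j : M, HasDerivAt (fun t => Real.exp (ℓ j / t))
        (Real.exp (ℓ j / τ) * (-(ℓ j) / τ ^ 2)) τ := by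
      intro j
      have h1 : HasDerivAt (fun t : ℝ => ℓ j / t) (-(ℓ j) / τ ^ 2) τ := by
        have := (hasDerivAt_inv hτ.ne').const_mul (ℓ j)
        simpa [div_eq_mul_inv, neg_div] using this
      exact h1.exp
    constructor
    · have := HasDerivAt.fun_sum (fun j _ =>  hterm j) (u := Finset.univ)
      convert this using 1
      any_goals rfl
      simp only [hN, hQ, neg_div, Finset.sum_div, ← Finset.sum_neg_distrib]
      exact Finset.sum_congr rfl fun j _ => by ring
    · have := HasDerivAt.fun_sum (fun j _ => (hterm j).mul_const (ℓ j)) (u := Finset.univ)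
      convert this using 1
      any_goals rfl
      simp only [hN, hQ, neg_div, Finset.sum_div, ← Finset.sum_neg_distrib]
      exact Finset.sum_congr rfl fun j _ => by ring
  have hFfun : F = fun τ => N τ / S τ := funext hFN
  have hDF : ∀ τ : ℝ, 0 < τ →
      HasDerivAt F ((F τ ^ 2 - ∑ i, w τ i * ℓ i ^ 2) / τ ^ 2) τ := by
    intro τ hτ
    obtain ⟨hS', hN'⟩ := hderiv τ hτ
    have h := hN'.div hS' (hSpos τ).ne'
    rw [hFfun]
    convert h using 1
    any_goals rfl
    simp only [hQw τ]
    field_simp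
    ring
  -- Jensen: F τ ^ 2 ≤ ∑ w ℓ^2
  have hJensen : ∀ τ, F τ ^ 2 ≤ ∑ i, w τ i * ℓ i ^ 2 := by
    intro τ
    have hconv : ConvexOn ℝ Set.univ fun x : ℝ => x ^ 2 :=
      Even.convexOn_pow (even_two)
    have := hconv.map_sum_le (t := Finset.univ) (w := w τ) (p := ℓ)
      (fun i _ => (hwpos τ i).le) (hwsum τ) (fun i _ => Set.mem_univ _)
    simpa [hF τ, smul_eq_mul] using this
  have hder_nonpos : ∀ τ : ℝ, 0 < τ →
      (F τ ^ 2 - ∑ i, w τ i * ℓ i ^ 2) / τ ^ 2 ≤ 0 :=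
    fun τ hτ => div_nonpos_of_nonpos_of_nonneg
      (sub_nonpos.2 (hJensen τ)) (sq_nonneg τ)
  -- limit of weights
  have hlim : ∀ i, Tendsto (fun τ => w τ i) atTop (nhds ((Fintype.card M : ℝ)⁻¹)) := by
    intro i
    have hbase : ∀ j : M, Tendsto (fun τ => Real.exp (ℓ j / τ)) atTop (nhds 1) := by
      intro j
      have : Tendsto (fun τ : ℝ => ℓ j / τ) atTop (nhds 0) :=
        Tendsto.div_atTop tendsto_const_nhds tendsto_id
      simpa [Function.comp_def] using (Real.continuous_exp.continuousAt.tendsto.comp this)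
    have hSlim : Tendsto S atTop (nhds (Fintype.card M : ℝ)) := by
      have := tendsto_finset_sum Finset.univ (fun j _ => hbase j)
      simpa [hS, Finset.card_univ] using this
    have hcard : (Fintype.card M : ℝ) ≠ 0 := by
      exact_mod_cast Fintype.card_ne_zero
    have := (hbase i).div hSlim hcard
    simpa [hw, one_div, Pi.div_def, hS] using this
  refine ⟨fun τ hτ => ⟨hDF τ hτ, hder_nonpos τ hτ⟩, hlim, ?_⟩
  intro τ₁ τ₂ hτ₂ hlt
  have hτ₁ : 0 < τ₁ := hτ₂.trans hlt
  -- antitone on Ioi 0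
  have hanti : AntitoneOn F (Set.Ioi 0) := by
    apply antitoneOn_of_deriv_nonpos (convex_Ioi 0)
    · intro x hx
      exact (hDF x hx).continuousAt.continuousWithinAt
    · intro x hx
      rw [interior_Ioi] at hx
      exact (hDF x hx).differentiableAt.differentiableWithinAt
    · intro x hx
      rw [interior_Ioi] at hx
      rw [(hDF x hx).deriv]
      exact hder_nonpos x hx
  have hF12 : F τ₁ ≤ F τ₂ := hanti hτ₂ hτ₁ hlt.le
  -- F tends to the average at infinity
  have hFlim : Tendsto F atTop (nhds ((Fintype.card M : ℝ)⁻¹ * ∑ i, ℓ i)) := by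
    have : Tendsto (fun τ => ∑ i, w τ i * ℓ i) atTop
        (nhds (∑ i, (Fintype.card M : ℝ)⁻¹ * ℓ i)) :=
      tendsto_finset_sum _ (fun i _ => (hlim i).mul_const (ℓ i))
    rw [← Finset.mul_sum] at this
    exact Tendsto.congr (fun τ => (hF τ).symm) this
  have hlower : (Fintype.card M : ℝ)⁻¹ * ∑ i, ℓ i ≤ F τ₁ := by
    apply le_of_tendsto hFlim
    filter_upwards [eventually_ge_atTop τ₁] with τ hτ
    exact hanti (Set.mem_Ioi.2 hτ₁) (Set.mem_Ioi.2 (hτ₁.trans_le hτ)) hτ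
  exact ⟨hlower, hF12⟩
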